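/- Every finite connected simple graph with an even number of vertices contains a spanning subgraph in which every vertex has odd degree: if V is a finite type with Fintype.card V even and G : SimpleGraph V is connected, then there exists a simple graph H on V with H ≤ G such that the degree of every vertex of H is odd. -/

import Mathlib

attribute [local instance] Classical.propDecidable

open scoped symmDiff

section aux
variable {V : Type*} [Fintype V]

lemma aux_odd_card_symmDiff (s t : Finset V) :
    Odd ((s ∆ t).card) ↔ (Odd s.card ↔ ¬ Odd t.card) := by
  classical
  have h1 : (s ∆ t) ∪ (s ∩ t) = s ∪ t := by
    ext x; simp [Finset.mem_symmDiff]; tauto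
  have hd : Disjoint (s ∆ t) (s ∩ t) := by
    rw [Finset.disjoint_left]; intro x hx hx'
    simp [Finset.mem_symmDiff] at hx; simp at hx'; tauto
  have h2 : (s ∆ t).card + (s ∩ t).card = (s ∪ t).card := by
    rw [← h1, Finset.card_union_of_disjoint hd]
  have h3 := Finset.card_union_add_card_inter s t
  simp only [Nat.odd_iff] at *
  omega

lemma aux_symmDiff_neighborFinset (H K : SimpleGraph V) (v : V) :
    (H ∆ K).neighborFinset v = (H.neighborFinset v) ∆ (K.neighborFinset v) := by
  ext x
  rw [SimpleGraph.mem_neighborFinset]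
  simp [SimpleGraph.mem_neighborFinset, Finset.mem_symmDiff, symmDiff_def, SimpleGraph.sup_adj, SimpleGraph.sdiff_adj]

lemma aux_odd_degree_symmDiff (H K : SimpleGraph V) (v : V) :
    Odd ((H ∆ K).degree v) ↔ (Odd (H.degree v) ↔ ¬ Odd (K.degree v)) := by
  simp only [SimpleGraph.degree, aux_symmDiff_neighborFinset]
  exact aux_odd_card_symmDiff _ _

lemma aux_edge_degree (a b : V) (hab : a ≠ b) (v : V) :
    Odd ((SimpleGraph.fromEdgeSet {s(a, b)}).degree v) ↔ (v = a ∨ v = b) := by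
  have : (SimpleGraph.fromEdgeSet {s(a, b)} : SimpleGraph V).neighborFinset v =
      if v = a then {b} else if v = b then {a} else ∅ := by
    ext x
    simp only [SimpleGraph.mem_neighborFinset, SimpleGraph.fromEdgeSet_adj,
      Set.mem_singleton_iff, Sym2.eq, Sym2.rel_iff', Prod.mk.injEq, Prod.swap_prod_mk]
    split_ifs with h1 h2 <;> simp_all
  rw [SimpleGraph.degree, this]
  split_ifs with h1 h2 <;> simp_all

lemma aux_path (G : SimpleGraph V) :
    ∀ {a b : V}, G.Walk a b → a ≠ b →
      ∃ P : SimpleGraph V, P ≤ G ∧ ∀ v, Odd (P.degree v) ↔ (v = a ∨ v = b) := by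
  intro a b w
  induction w with
  | nil => intro h; exact absurd rfl h
  | @cons a c b hac w ih =>
    intro hab
    by_cases hcb : c = b
    · subst hcb
      refine ⟨SimpleGraph.fromEdgeSet {s(a, c)}, ?_, fun v => by convert aux_edge_degree a c hab v⟩
      intro x y hxy
      simp only [SimpleGraph.fromEdgeSet_adj, Set.mem_singleton_iff] at hxy
      rcases hxy.1 with h
      rw [Sym2.eq_iff] at h
      rcases h with ⟨rfl, rfl⟩ | ⟨rfl, rfl⟩
      · exact hac
      · exact hac.symm
    · obtain ⟨P, hPG, hP⟩ := ih hcb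
      have hac' : a ≠ c := G.ne_of_adj hac
      refine ⟨P ∆ (SimpleGraph.fromEdgeSet {s(a, c)}), ?_, ?_⟩
      · have hE : (SimpleGraph.fromEdgeSet {s(a, c)} : SimpleGraph V) ≤ G := by
          intro x y hxy
          simp only [SimpleGraph.fromEdgeSet_adj, Set.mem_singleton_iff] at hxy
          rcases hxy.1 with h
          rw [Sym2.eq_iff] at h
          rcases h with ⟨rfl, rfl⟩ | ⟨rfl, rfl⟩
          · exact hac
          · exact hac.symm
        calc P ∆ _ ≤ P ⊔ _ := symmDiff_le_sup
          _ ≤ G := sup_le hPG hE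
      · intro v
        have he : ∀ inst, Odd (@SimpleGraph.degree V (SimpleGraph.fromEdgeSet {s(a, c)}) v inst) ↔ (v = a ∨ v = c) :=
          fun inst => by convert aux_edge_degree a c hac' v
        rw [aux_odd_degree_symmDiff, hP, he]
        by_cases h1 : v = a <;> by_cases h2 : v = c <;> by_cases h3 : v = b <;>
          simp_all

lemma aux_main (G : SimpleGraph V) (hG : G.Connected) :
    ∀ n (T : Finset V), T.card = n → Even n →
      ∃ H : SimpleGraph V, H ≤ G ∧ ∀ v, Odd (H.degree v) ↔ v ∈ T := by
  intro n
  induction n using Nat.strong_induction_on with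
  | _ n ih =>
    intro T hT hn
    rcases Finset.eq_empty_or_nonempty T with rfl | ⟨a, ha⟩
    · exact ⟨⊥, bot_le, fun v => by
        simp only [Finset.notMem_empty, iff_false]
        intro hodd
        obtain ⟨u, hu⟩ := Finset.card_pos.mp hodd.pos
        simp at hu⟩
    · have h2 : 2 ≤ T.card := by
        rcases hn with ⟨k, hk⟩
        have : T.card ≠ 0 := by simp [Finset.card_eq_zero]; exact Finset.nonempty_iff_ne_empty.mp ⟨a, ha⟩
        omega
      obtain ⟨b, hb, hab⟩ : ∃ b ∈ T, b ≠ a := by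
        by_contra h
        push_neg at h
        have : T ⊆ {a} := fun x hx => Finset.mem_singleton.mpr (h x hx)
        have := Finset.card_le_card this
        simp at this; omega
      set T' := T \ {a, b} with hT'
      have hcard : T'.card = T.card - 2 := by
        rw [hT', Finset.card_sdiff_of_subset]
        · simp [Finset.card_insert_of_notMem, hab.symm]
        · intro x hx
          simp at hx
          rcases hx with rfl | rfl <;> assumption
      obtain ⟨H, hHG, hH⟩ := ih (n - 2) (by omega) T' (by omega) (by
        rcases hn with ⟨k, hk⟩; exact ⟨k - 1, by omega⟩)
      obtain ⟨P, hPG, hP⟩ := aux_path G ((hG.preconnected a b).some) hab.symm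
      refine ⟨H ∆ P, ?_, ?_⟩
      · calc H ∆ P ≤ H ⊔ P := symmDiff_le_sup
          _ ≤ G := sup_le hHG hPG
      · intro v
        rw [aux_odd_degree_symmDiff, hH, hP]
        simp only [hT', Finset.mem_sdiff, Finset.mem_insert, Finset.mem_singleton]
        by_cases h1 : v = a <;> by_cases h2 : v = b <;> simp_all

end aux

/-- Every finite connected simple graph with an even number of vertices contains a
spanning subgraph in which every vertex has odd degree. -/
theorem exists_odd_degree_subgraph {V : Type*} [Fintype V]
    (G : SimpleGraph V) (hG : G.Connected) (hV : Even (Fintype.card V)) :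
    ∃ H : SimpleGraph V, H ≤ G ∧ ∀ v : V, Odd (H.degree v) := by
  obtain ⟨H, hHG, hH⟩ := aux_main G hG (Fintype.card V) Finset.univ (by simp) hV
  exact ⟨H, hHG, fun v => (hH v).mpr (Finset.mem_univ v)⟩
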